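/- For a separable function F(x) = Σᵢ gᵢ(xᵢ) with each gᵢ : ℝ → ℝ continuously differentiable, the Integrated Gradients attribution of feature i with baseline x' equals gᵢ(xᵢ) − gᵢ(x'ᵢ), and this coincides with the Shapley Value of feature i in the game v(S) = F(x_S) − F(x'), where x_S agrees with x on S and with x' elsewhere. -/

import Mathlib

/-- For a separable `C¹` function `F x = Σᵢ gᵢ (xᵢ)`, the Integrated
Gradients attribution of feature `i` equals `gᵢ (xᵢ) - gᵢ (x'ᵢ)`, and this
coincides with the Shapley Value of feature `i` in the game
`v S = F (x_S) - F x'` where `x_S` agrees with `x` on `S` and `x'` elsewhere. -/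
theorem ig_separable {n : ℕ} (g : Fin n → ℝ → ℝ)
    (hg : ∀ i, ContDiff ℝ 1 (g i))
    (F : (Fin n → ℝ) → ℝ) (hF : ∀ y, F y = ∑ j, g j (y j))
    (x x' : Fin n → ℝ)
    (v : Finset (Fin n) → ℝ)
    (hv : ∀ S, v S = F (fun j => if j ∈ S then x j else x' j) - F x')
    (i : Fin n) :
    ((x i - x' i) *
      ∫ α in (0:ℝ)..1, fderiv ℝ F (x' + α • (x - x')) (Pi.single i 1) =
      g i (x i) - g i (x' i)) ∧
    ((x i - x' i) *
      ∫ α in (0:ℝ)..1, fderiv ℝ F (x' + α • (x - x')) (Pi.single i 1) =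
     ∑ S ∈ ((Finset.univ : Finset (Fin n)).erase i).powerset,
       (Nat.factorial S.card * Nat.factorial (n - S.card - 1) : ℝ) /
         Nat.factorial n * (v (insert i S) - v S)) := by
  -- fderiv computation
  have hder : ∀ y : Fin n → ℝ, fderiv ℝ F y (Pi.single i 1) = deriv (g i) (y i) := by
    intro y
    have hFeq : F = fun y : Fin n → ℝ => ∑ j, g j (y j) := funext hF
    have hj : ∀ j : Fin n, HasFDerivAt (fun y : Fin n → ℝ => g j (y j))
        ((deriv (g j) (y j)) • (ContinuousLinearMap.proj j : (Fin n → ℝ) →L[ℝ] ℝ)) y := by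
      intro j
      have hp : HasFDerivAt (fun y : Fin n → ℝ => y j)
          (ContinuousLinearMap.proj j : (Fin n → ℝ) →L[ℝ] ℝ) y := by
        exact (ContinuousLinearMap.proj j : (Fin n → ℝ) →L[ℝ] ℝ).hasFDerivAt
      exact (((hg j).differentiable one_ne_zero).differentiableAt.hasDerivAt).comp_hasFDerivAt y hp
    have hsum : HasFDerivAt F
        (∑ j, (deriv (g j) (y j)) • (ContinuousLinearMap.proj j : (Fin n → ℝ) →L[ℝ] ℝ)) y := by
      rw [hFeq]
      exact HasFDerivAt.fun_sum fun j _ => hj j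
    rw [hsum.fderiv]
    simp [ContinuousLinearMap.sum_apply, Pi.single_apply, mul_ite, Finset.sum_ite_eq']
  have key : (x i - x' i) *
      ∫ α in (0:ℝ)..1, fderiv ℝ F (x' + α • (x - x')) (Pi.single i 1) =
      g i (x i) - g i (x' i) := by
    have heval : ∀ α : ℝ, fderiv ℝ F (x' + α • (x - x')) (Pi.single i 1)
        = deriv (g i) (x' i + α * (x i - x' i)) := by
      intro α; rw [hder]; simp
    have hc : Continuous (deriv (g i)) := (hg i).continuous_deriv le_rfl
    have hft : ∀ α ∈ Set.uIcc (0:ℝ) 1, HasDerivAt (fun t => g i (x' i + t * (x i - x' i)))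
        ((x i - x' i) * deriv (g i) (x' i + α * (x i - x' i))) α := by
      intro α _
      have h1 : HasDerivAt (fun t : ℝ => x' i + t * (x i - x' i)) (x i - x' i) α := by
        simpa using ((hasDerivAt_id α).mul_const (x i - x' i)).const_add (x' i)
      have h2 := (((hg i).differentiable one_ne_zero).differentiableAt.hasDerivAt
        (x := x' i + α * (x i - x' i))).comp α h1
      rw [mul_comm]; exact h2
    have hcont : IntervalIntegrable
        (fun α => (x i - x' i) * deriv (g i) (x' i + α * (x i - x' i))) MeasureTheory.volume 0 1 :=
      ((continuous_const.mul (hc.comp (by continuity))).intervalIntegrable 0 1)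
    have := intervalIntegral.integral_eq_sub_of_hasDerivAt hft hcont
    rw [intervalIntegral.integral_congr (fun α _ => heval α), ← intervalIntegral.integral_const_mul]
    simpa using this
  refine ⟨key, key.trans ?_⟩
  -- Shapley side
  have hdiff : ∀ S ∈ ((Finset.univ : Finset (Fin n)).erase i).powerset,
      v (insert i S) - v S = g i (x i) - g i (x' i) := by
    intro S hS
    have hiS : i ∉ S := fun h => (Finset.mem_erase.1 (Finset.mem_powerset.1 hS h)).1 rfl
    rw [hv, hv, hF, hF, hF]
    have : ∀ j : Fin n,
        g j (if j ∈ insert i S then x j else x' j) - g j (if j ∈ S then x j else x' j)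
        = if j = i then g i (x i) - g i (x' i) else 0 := by
      intro j
      by_cases hji : j = i
      · subst hji; simp [hiS]
      · simp [Finset.mem_insert, hji]
    rw [sub_sub_sub_cancel_right, ← Finset.sum_sub_distrib,
      Finset.sum_congr rfl (fun j _ => this j)]
    simp
  rw [Finset.sum_congr rfl (fun S hS => by rw [hdiff S hS])]
  have hcard : ((Finset.univ : Finset (Fin n)).erase i).card = n - 1 := by
    rw [Finset.card_erase_of_mem (Finset.mem_univ i), Finset.card_univ, Fintype.card_fin]
  have hn : 1 ≤ n := Nat.one_le_iff_ne_zero.2 (fun h => (h ▸ i).elim0)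
  have hsum1 : ∑ S ∈ ((Finset.univ : Finset (Fin n)).erase i).powerset,
      (Nat.factorial S.card * Nat.factorial (n - S.card - 1) : ℝ) / Nat.factorial n = 1 := by
    rw [Finset.sum_powerset_apply_card
      (fun m => (Nat.factorial m * Nat.factorial (n - m - 1) : ℝ) / Nat.factorial n), hcard]
    have : ∀ m ∈ Finset.range (n - 1 + 1),
        (n - 1).choose m • ((Nat.factorial m * Nat.factorial (n - m - 1) : ℝ) / Nat.factorial n)
        = (1 : ℝ) / n := by
      intro m hm
      have hm' : m ≤ n - 1 := Nat.lt_succ_iff.1 (Finset.mem_range.1 hm)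
      have hkey : (n - 1).choose m * Nat.factorial m * Nat.factorial (n - 1 - m)
          = Nat.factorial (n - 1) := Nat.choose_mul_factorial_mul_factorial hm'
      have hrw : n - m - 1 = n - 1 - m := by omega
      have hfact : n * (n - 1).factorial = (n : ℕ).factorial := Nat.mul_factorial_pred (by omega)
      have h1 : (((n-1).choose m : ℝ)) * (m.factorial * (n-1-m).factorial)
          = (n-1).factorial := by push_cast [← hkey]; ring
      rw [hrw, nsmul_eq_mul, mul_div_assoc', h1,
        div_eq_div_iff (by positivity : (Nat.factorial n : ℝ) ≠ 0) (by positivity : (n:ℝ) ≠ 0)]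
      push_cast [← hfact]
      ring
    rw [Finset.sum_congr rfl this]
    simp only [Finset.sum_const, Finset.card_range, nsmul_eq_mul]
    have : n - 1 + 1 = n := by omega
    rw [this]
    field_simp
  calc g i (x i) - g i (x' i)
      = (∑ S ∈ ((Finset.univ : Finset (Fin n)).erase i).powerset,
          (Nat.factorial S.card * Nat.factorial (n - S.card - 1) : ℝ) / Nat.factorial n)
        * (g i (x i) - g i (x' i)) := by rw [hsum1, one_mul]
    _ = _ := by rw [Finset.sum_mul]
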